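/- Let H and K be complex Hadamard matrices of order n with H ≠ K, let D = {(i,j) : H_{ij} ≠ K_{ij}}, let r be a row of H meeting D for which the number of columns j with (r,j) ∈ D is minimal among all rows meeting D, and let B = {j : (r,j) ∈ D}. Then the coefficients c_j = conj(H_{rj}) − conj(K_{rj}), which are supported on B and non-zero for every j ∈ B, satisfy Σ_{j∈B} c_j H_{ij} = 0 for every row i of H in which H and K agree in every column; that is, there is a non-trivial linear combination of the |B| columns of H indexed by B that vanishes at every row not meeting D. -/

import Mathlib

/-- From the proof of Theorem `floorgen`: if `H` and `K` are distinct complex Hadamard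
matrices, `r` is a row meeting the set `D` of differing positions in a minimal number `b`
of columns, and `B = {j : (r,j) ∈ D}`, then the coefficients `c j = conj (H r j) - conj (K r j)`
are supported on `B`, non-zero on `B`, and the linear combination `∑ j, c j * H i j` of
the columns indexed by `B` vanishes at every row `i` not meeting `D`. -/
theorem stmt_14 (n : ℕ) (H K : Matrix (Fin n) (Fin n) ℂ)
    (hHent : ∀ i j, ‖H i j‖ = 1)
    (hHHad : H * H.conjTranspose = (n : ℂ) • 1)
    (hKent : ∀ i j, ‖K i j‖ = 1)
    (hKHad : K * K.conjTranspose = (n : ℂ) • 1)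
    (hne : H ≠ K)
    (r : Fin n) (hr : ∃ j, H r j ≠ K r j)
    (hmin : ∀ i : Fin n, (∃ j, H i j ≠ K i j) →
      Set.ncard {j : Fin n | H r j ≠ K r j} ≤ Set.ncard {j : Fin n | H i j ≠ K i j}) :
    (∀ j, H r j = K r j → (starRingEnd ℂ) (H r j) - (starRingEnd ℂ) (K r j) = 0) ∧
    (∀ j, H r j ≠ K r j → (starRingEnd ℂ) (H r j) - (starRingEnd ℂ) (K r j) ≠ 0) ∧
    (∀ i : Fin n, (∀ j, H i j = K i j) →
      ∑ j : Fin n, ((starRingEnd ℂ) (H r j) - (starRingEnd ℂ) (K r j)) * H i j = 0) := by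
  refine ⟨fun j h => by rw [h, sub_self], fun j h hc => h ?_, fun i hi => ?_⟩
  · have := sub_eq_zero.mp hc
    exact (starRingEnd ℂ).injective this
  · have hir : i ≠ r := by
      rintro rfl
      obtain ⟨j, hj⟩ := hr
      exact hj (hi j)
    have h1 : ∑ j : Fin n, (starRingEnd ℂ) (H r j) * H i j = 0 := by
      have := congrFun (congrFun hHHad i) r
      simp [Matrix.mul_apply, Matrix.conjTranspose_apply, Matrix.one_apply, hir,
        mul_comm] at this ⊢
      simpa [mul_comm] using this
    have h2 : ∑ j : Fin n, (starRingEnd ℂ) (K r j) * H i j = 0 := by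
      have := congrFun (congrFun hKHad i) r
      simp [Matrix.mul_apply, Matrix.conjTranspose_apply, Matrix.one_apply, hir,
        mul_comm] at this
      calc ∑ j : Fin n, (starRingEnd ℂ) (K r j) * H i j
          = ∑ j : Fin n, (starRingEnd ℂ) (K r j) * K i j := by
            refine Finset.sum_congr rfl fun j _ => by rw [hi j]
        _ = 0 := by simpa [mul_comm] using this
    simp only [sub_mul, Finset.sum_sub_distrib, h1, h2, sub_zero]
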